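/- Let X be a complete CAT(0) space and g an isometry fixing two opposite boundary points ξ⁻, ξ⁺ ∈ ∂∞X. Let F = F_{ξ⁻ξ⁺} = C × ℝ be the union of geodesics from ξ⁻ to ξ⁺ with its canonical product decomposition, and write g = (g', t) on F. If t = ℓ(g) (equivalently t > 0 and ℓ(g') = 0), then for every x ∈ X one has g^k x → ξ⁺ and g^{−k} x → ξ⁻ in the cone topology as k → +∞; that is, ξ⁺ and ξ⁻ are the attractive and repulsive fixed points of g at infinity. -/

import Mathlib

open Filter
open scoped NNReal

/-- A geodesic metric space (existence of midpoints) satisfying the CN inequality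
of Bruhat–Tits, an equivalent characterization of CAT(0). -/
structure IsCAT0 (X : Type*) [MetricSpace X] : Prop where
  midpoint : ∀ x y : X, ∃ m : X, dist x m = dist x y / 2 ∧ dist m y = dist x y / 2
  cn : ∀ x y z m : X, dist y m = dist y z / 2 → dist m z = dist y z / 2 →
    dist x m ^ 2 ≤ dist x y ^ 2 / 2 + dist x z ^ 2 / 2 - dist y z ^ 2 / 4

/-- Two geodesic rays are asymptotic if they stay at bounded distance. -/
def AsympRay {X : Type*} [MetricSpace X] (c c' : ℝ≥0 → X) : Prop :=
  ∃ C : ℝ, ∀ t, dist (c t) (c' t) ≤ C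

/-- A sequence converges, in the cone topology, to the boundary point of the ray `c`:
it sublinearly tracks points `c (s k)` with `s k → ∞`. -/
def ConvergesToRay {X : Type*} [MetricSpace X] (x : ℕ → X) (c : ℝ≥0 → X) : Prop :=
  ∃ s : ℕ → ℝ≥0, Tendsto s atTop atTop ∧
    Tendsto (fun k => dist (x k) (c (s k)) / (s k : ℝ)) atTop (nhds 0)

/-- Let `g` be an isometry of a complete CAT(0) space fixing two opposite boundary
points `ξ⁻ = r(-∞)`, `ξ⁺ = r(+∞)`, and let `φ : C × ℝ ≃ F_{ξ⁻ξ⁺}` be the canonical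
splitting of the parallel set, on which `g` acts as `(g', t)`. If `t > 0` and
`ℓ(g') = 0`, then for every `x`, `gᵏx → ξ⁺` and `g⁻ᵏx → ξ⁻` in the cone topology:
`ξ⁺` and `ξ⁻` are the attractive and repulsive fixed points of `g` at infinity. -/
theorem stmt4 {X : Type*} [MetricSpace X] [CompleteSpace X] (hX : IsCAT0 X)
    {C : Type*} [MetricSpace C] [Nonempty C]
    (g : X ≃ᵢ X) (r : ℝ → X) (hr : Isometry r)
    (φ : C → ℝ → X)
    (hφ : ∀ c c' s s', dist (φ c s) (φ c' s') = Real.sqrt (dist c c' ^ 2 + (s - s') ^ 2))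
    (hpar : ∀ c : C, AsympRay (fun u : ℝ≥0 => φ c (u : ℝ)) (fun u : ℝ≥0 => r (u : ℝ)) ∧
      AsympRay (fun u : ℝ≥0 => φ c (-(u : ℝ))) (fun u : ℝ≥0 => r (-(u : ℝ))))
    (g' : C → C) (hg'iso : Isometry g') (t : ℝ)
    (hg : ∀ c s, g (φ c s) = φ (g' c) (s + t))
    (ht : 0 < t) (hg'0 : (⨅ c : C, dist c (g' c)) = 0) :
    ∀ x : X, ConvergesToRay (fun k => (⇑g)^[k] x) (fun u : ℝ≥0 => r (u : ℝ)) ∧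
      ConvergesToRay (fun k => (⇑g.symm)^[k] x) (fun u : ℝ≥0 => r (-(u : ℝ))) := by
  intro x
  classical
  set c₀ : C := Classical.arbitrary C with hc₀
  -- displacement sequence
  set a : ℕ → ℝ := fun k => dist c₀ (g'^[k] c₀) with ha
  have hg'it : ∀ k : ℕ, Isometry (g'^[k]) := by
    intro k
    induction k with
    | zero => simpa using isometry_id
    | succ k ih => rw [Function.iterate_succ']; exact hg'iso.comp ih
  have hgiso : ∀ k : ℕ, Isometry ((⇑g)^[k]) := by
    intro k
    induction k with
    | zero => simpa using isometry_id
    | succ k ih => rw [Function.iterate_succ']; exact g.isometry.comp ih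
  -- a k / k → 0
  have ha0 : Tendsto (fun k : ℕ => a k / k) atTop (nhds 0) := by
    rw [Metric.tendsto_atTop]
    intro ε hε
    obtain ⟨c₁, hc₁⟩ : ∃ c : C, dist c (g' c) < ε / 4 :=
      exists_lt_of_ciInf_lt (by rw [hg'0]; positivity)
    have hb1 : ∀ k : ℕ, dist c₁ (g'^[k] c₁) ≤ k * (ε / 4) := by
      intro k
      induction k with
      | zero => simp
      | succ k ih =>
        have h1 : dist c₁ (g'^[k+1] c₁) ≤ dist c₁ (g' c₁) + dist (g' c₁) (g'^[k+1] c₁) :=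
          dist_triangle _ _ _
        have h2 : dist (g' c₁) (g'^[k+1] c₁) = dist c₁ (g'^[k] c₁) := by
          rw [Function.iterate_succ_apply', hg'iso.dist_eq]
        push_cast
        rw [h2] at h1
        nlinarith [hc₁]
    have hb2 : ∀ k : ℕ, a k ≤ 2 * dist c₀ c₁ + k * (ε / 4) := by
      intro k
      have h1 : a k ≤ dist c₀ c₁ + dist c₁ (g'^[k] c₁) + dist (g'^[k] c₁) (g'^[k] c₀) :=
        dist_triangle4 _ _ _ _
      have h2 : dist (g'^[k] c₁) (g'^[k] c₀) = dist c₁ c₀ := (hg'it k).dist_eq _ _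
      rw [h2, dist_comm c₁ c₀] at h1
      have := hb1 k
      linarith
    obtain ⟨N, hN⟩ := exists_nat_gt (2 * dist c₀ c₁ / (ε / 2))
    refine ⟨max N 1, fun k hk => ?_⟩
    have hk1 : (1 : ℕ) ≤ k := le_trans (le_max_right _ _) hk
    have hkN : (N : ℝ) ≤ k := by exact_mod_cast le_trans (le_max_left _ _) hk
    have hkpos : (0 : ℝ) < k := by exact_mod_cast hk1
    have hak : a k ≤ 2 * dist c₀ c₁ + k * (ε / 4) := hb2 k
    have hanneg : 0 ≤ a k := dist_nonneg
    have hdk : 2 * dist c₀ c₁ < k * (ε / 2) := by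
      have : 2 * dist c₀ c₁ / (ε / 2) < (k : ℝ) := lt_of_lt_of_le hN hkN
      rw [div_lt_iff₀ (by positivity)] at this
      linarith
    rw [Real.dist_eq, sub_zero, abs_of_nonneg (by positivity)]
    rw [div_lt_iff₀ hkpos]
    nlinarith
  -- action of iterates on the parallel set
  have hgk : ∀ (k : ℕ) (c : C) (s : ℝ), (⇑g)^[k] (φ c s) = φ (g'^[k] c) (s + k * t) := by
    intro k
    induction k with
    | zero => intro c s; simp
    | succ k ih =>
      intro c s
      rw [Function.iterate_succ_apply', ih, hg, Function.iterate_succ_apply']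
      congr 1
      push_cast
      ring
  have hφ0 : ∀ (c c' : C) (s : ℝ), dist (φ c s) (φ c' s) = dist c c' := by
    intro c c' s
    rw [hφ]
    simp [Real.sqrt_sq dist_nonneg]
  have hinv : ∀ (k : ℕ) (y : X), (⇑g)^[k] ((⇑g.symm)^[k] y) = y := by
    intro k
    induction k with
    | zero => intro y; simp
    | succ k ih =>
      intro y
      rw [Function.iterate_succ_apply', Function.iterate_succ_apply (⇑g.symm), ih,
        IsometryEquiv.apply_symm_apply]
  set D : ℝ := dist x (φ c₀ 0) with hD
  -- the time sequence
  set tn : ℝ≥0 := ⟨t, ht.le⟩ with htn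
  set s : ℕ → ℝ≥0 := fun k => (k : ℝ≥0) * tn with hs
  have hcoe : ∀ k : ℕ, ((s k : ℝ≥0) : ℝ) = (k : ℝ) * t := by
    intro k; show (((k : ℝ≥0) * tn : ℝ≥0) : ℝ) = (k : ℝ) * t; rw [NNReal.coe_mul, NNReal.coe_natCast]; rfl
  have hstend : Tendsto s atTop atTop := by
    rw [← NNReal.tendsto_coe_atTop]
    simp only [hcoe]
    exact tendsto_natCast_atTop_atTop.atTop_mul_const ht
  -- the bounding sequence tends to 0
  have hbound : ∀ B : ℝ, Tendsto (fun k : ℕ => (B + a k) / ((k : ℝ) * t)) atTop (nhds 0) := by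
    intro B
    have heq : (fun k : ℕ => (B + a k) / ((k : ℝ) * t))
        = fun k : ℕ => B / ((k : ℝ) * t) + (a k / k) / t := by
      funext k
      rw [div_div, add_div]
    rw [heq]
    have h1 : Tendsto (fun k : ℕ => B / ((k : ℝ) * t)) atTop (nhds 0) :=
      tendsto_const_nhds.div_atTop (tendsto_natCast_atTop_atTop.atTop_mul_const ht)
    have h2 : Tendsto (fun k : ℕ => (a k / k) / t) atTop (nhds 0) := by
      simpa using ha0.div_const t
    simpa using h1.add h2
  constructor
  · -- forward direction
    obtain ⟨Cp, hCp⟩ := (hpar c₀).1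
    refine ⟨s, hstend, ?_⟩
    have hdist : ∀ k : ℕ, dist ((⇑g)^[k] x) (r ((s k : ℝ))) ≤ (D + Cp) + a k := by
      intro k
      have h1 : dist ((⇑g)^[k] x) ((⇑g)^[k] (φ c₀ 0)) = D := (hgiso k).dist_eq _ _
      have h2 : dist ((⇑g)^[k] (φ c₀ 0)) (φ c₀ ((k : ℝ) * t)) = a k := by
        rw [hgk, zero_add, hφ0, dist_comm]
      have h3 := hCp (s k)
      simp only [hcoe] at h3 ⊢
      calc dist ((⇑g)^[k] x) (r ((k : ℝ) * t))
          ≤ dist ((⇑g)^[k] x) ((⇑g)^[k] (φ c₀ 0)) + dist ((⇑g)^[k] (φ c₀ 0)) (φ c₀ ((k : ℝ) * t))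
            + dist (φ c₀ ((k : ℝ) * t)) (r ((k : ℝ) * t)) := dist_triangle4 _ _ _ _
        _ ≤ (D + Cp) + a k := by rw [h1, h2]; linarith
    refine squeeze_zero' (Eventually.of_forall fun k =>
      div_nonneg dist_nonneg (s k).coe_nonneg) ?_ (hbound (D + Cp))
    filter_upwards [eventually_ge_atTop 1] with k hk
    have hkpos : (0 : ℝ) < (k : ℝ) * t := by
      have : (0:ℝ) < (k:ℝ) := by exact_mod_cast hk
      positivity
    rw [hcoe]
    exact div_le_div_of_nonneg_right (hdist k) hkpos.le
  · -- backward direction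
    obtain ⟨Cm, hCm⟩ := (hpar c₀).2
    refine ⟨s, hstend, ?_⟩
    have hdist : ∀ k : ℕ, dist ((⇑g.symm)^[k] x) (r (-((s k : ℝ)))) ≤ (D + Cm) + a k := by
      intro k
      have h1 : dist ((⇑g.symm)^[k] x) (φ c₀ (-((k : ℝ) * t)))
          = dist x (φ (g'^[k] c₀) 0) := by
        rw [← (hgiso k).dist_eq, hinv, hgk, neg_add_cancel]
      have h2 : dist x (φ (g'^[k] c₀) 0) ≤ D + a k := by
        calc dist x (φ (g'^[k] c₀) 0)
            ≤ dist x (φ c₀ 0) + dist (φ c₀ 0) (φ (g'^[k] c₀) 0) := dist_triangle _ _ _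
          _ = D + a k := by rw [hφ0]
      have h3 := hCm (s k)
      simp only [hcoe] at h3 ⊢
      calc dist ((⇑g.symm)^[k] x) (r (-((k : ℝ) * t)))
          ≤ dist ((⇑g.symm)^[k] x) (φ c₀ (-((k : ℝ) * t)))
            + dist (φ c₀ (-((k : ℝ) * t))) (r (-((k : ℝ) * t))) := dist_triangle _ _ _
        _ ≤ (D + Cm) + a k := by rw [h1]; linarith
    refine squeeze_zero' (Eventually.of_forall fun k =>
      div_nonneg dist_nonneg (s k).coe_nonneg) ?_ (hbound (D + Cm))
    filter_upwards [eventually_ge_atTop 1] with k hk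
    have hkpos : (0 : ℝ) < (k : ℝ) * t := by
      have : (0:ℝ) < (k:ℝ) := by exact_mod_cast hk
      positivity
    rw [hcoe]
    exact div_le_div_of_nonneg_right (hdist k) hkpos.le
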